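/- The generating function F(q,z) of p-fountains satisfies the functional equation F(q,z) = 1 + qz + ... + (qz)^{p-1} + (qz)^{-p+1} G(q,z) (F(q,z) - 1 - qz - ... - (qz)^{p-2}), where G(q,z) = (qz)^p F(q,qz). -/

import Mathlib

/-- A `p`-fountain: an arrangement of coins in rows. `rows i` is the set of positions of
coins in row `i` (row `0` is the bottom row). The bottom row consists of consecutive coins,
and each coin in a higher row has exactly `p+1` descendant coins immediately below it
(so two horizontally adjacent coins share exactly `p` common descendants). -/
structure Fountain (p : ℕ) where
  rows : ℕ → Finset ℕ
  bottom_consecutive : rows 0 = Finset.range (rows 0).card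
  supported : ∀ i j, j ∈ rows (i + 1) → ∀ d ≤ p, j + d ∈ rows i

namespace Fountain
variable {p : ℕ}

/-- The length of the bottom row. -/
def width (F : Fountain p) : ℕ := (F.rows 0).card

/-- The total number of coins. (For `p ≥ 1` all rows above row `width` are empty.) -/
def coins (F : Fountain p) : ℕ := ∑ i ∈ Finset.range (F.width + 1), (F.rows i).card

/-- A fountain is primitive if its next-to-bottom row is full, i.e. has `width - p` coins
(in particular this requires `width ≥ p`). -/
def Primitive (F : Fountain p) : Prop :=
  p ≤ F.width ∧ F.rows 1 = Finset.range (F.width - p)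

end Fountain

/-- `fcount p n k` = number of `(n,k)` `p`-fountains. -/
noncomputable def fcount (p n k : ℕ) : ℕ :=
  Set.ncard {F : Fountain p | F.coins = n ∧ F.width = k}

/-- `gcount p n k` = number of primitive `(n,k)` `p`-fountains. -/
noncomputable def gcount (p n k : ℕ) : ℕ :=
  Set.ncard {F : Fountain p | F.Primitive ∧ F.coins = n ∧ F.width = k}

/-- `hcount p n k` = number of non-primitive `(n,k)` `p`-fountains. -/
noncomputable def hcount (p n k : ℕ) : ℕ :=
  Set.ncard {F : Fountain p | ¬ F.Primitive ∧ F.coins = n ∧ F.width = k}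

/-- The generating function `F(q,z) = ∑ f(n,k) qⁿ zᵏ`, where `q = X 0`, `z = X 1`. -/
noncomputable def Fgf (p : ℕ) : MvPowerSeries (Fin 2) ℚ :=
  fun d => (fcount p (d 0) (d 1) : ℚ)

/-- The generating function `G(q,z) = ∑ g(n,k) qⁿ zᵏ` of primitive fountains. -/
noncomputable def Ggf (p : ℕ) : MvPowerSeries (Fin 2) ℚ :=
  fun d => (gcount p (d 0) (d 1) : ℚ)

/-- The generating function `H(q,z) = ∑ h(n,k) qⁿ zᵏ` of non-primitive fountains. -/
noncomputable def Hgf (p : ℕ) : MvPowerSeries (Fin 2) ℚ :=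
  fun d => (hcount p (d 0) (d 1) : ℚ)

/-- The substituted series `F(q, qz) = ∑ f(n,k) q^{n+k} z^k`. -/
noncomputable def Fqz (p : ℕ) : MvPowerSeries (Fin 2) ℚ :=
  fun d => if d 1 ≤ d 0 then (fcount p (d 0 - d 1) (d 1) : ℚ) else 0


/-- The series `(qz)^{-p+1} G(q,z)`, well defined since `G` is divisible by `(qz)^{p-1}`. -/
noncomputable def Gshift (p : ℕ) : MvPowerSeries (Fin 2) ℚ :=
  fun d => (gcount p (d 0 + (p - 1)) (d 1 + (p - 1)) : ℚ)

namespace Fountain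
variable {p : ℕ}

theorem ext' {F G : Fountain p} (h : F.rows = G.rows) : F = G := by
  cases F; cases G; dsimp at h; subst h; rfl

theorem rows_zero (F : Fountain p) : F.rows 0 = Finset.range F.width :=
  F.bottom_consecutive

theorem rows_subset (F : Fountain p) : ∀ i, F.rows i ⊆ Finset.range (F.width - i * p) := by
  intro i
  induction i with
  | zero => simpa using F.rows_zero.le
  | succ m ih =>
    intro j hj
    have h1 : j + p ∈ F.rows m := F.supported m j hj p le_rfl
    have h2 := ih h1
    simp only [Finset.mem_range] at h2 ⊢
    have : (m + 1) * p = m * p + p := by ring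
    omega

theorem rows_eq_empty (F : Fountain p) (hp : 1 ≤ p) {i : ℕ} (hi : F.width ≤ i) (hi' : 1 ≤ i) :
    F.rows i = ∅ := by
  have h := F.rows_subset i
  have hip : i * 1 ≤ i * p := Nat.mul_le_mul_left i hp
  have : F.width - i * p = 0 := by omega
  rw [this] at h
  simpa using Finset.subset_empty.mp (by simpa using h)

theorem coins_eq (F : Fountain p) (hp : 1 ≤ p) {N : ℕ} (hN : F.width ≤ N) :
    F.coins = F.width + ∑ i ∈ Finset.range N, (F.rows (i + 1)).card := by
  unfold coins
  rw [Finset.sum_range_succ']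
  rw [show (F.rows 0).card = F.width from rfl, add_comm]
  congr 1
  apply Finset.sum_subset (Finset.range_subset_range.mpr hN)
  · intro i hi hni
    simp only [Finset.mem_range] at hi hni
    have : F.rows (i + 1) = ∅ := F.rows_eq_empty hp (by omega) (by omega)
    simp [this]

theorem width_le_coins (F : Fountain p) : F.width ≤ F.coins := by
  unfold coins
  calc F.width = (F.rows 0).card := rfl
    _ ≤ _ := Finset.single_le_sum (f := fun i => (F.rows i).card)
        (fun _ _ => Nat.zero_le _) (by simp)

theorem rows_succ_eq_empty_of_width_le (F : Fountain p) (hw : F.width ≤ p) (i : ℕ) :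
    F.rows (i + 1) = ∅ := by
  have h := F.rows_subset (i + 1)
  have : F.width - (i + 1) * p = 0 := by
    have : p ≤ (i + 1) * p := Nat.le_mul_of_pos_left p (by omega)
    omega
  rw [this] at h
  simpa using Finset.subset_empty.mp (by simpa using h)

theorem coins_eq_width (F : Fountain p) (hw : F.width ≤ p) : F.coins = F.width := by
  unfold coins
  rw [Finset.sum_range_succ']
  have : ∀ i ∈ Finset.range F.width, (F.rows (i + 1)).card = 0 := by
    intro i _; rw [F.rows_succ_eq_empty_of_width_le hw]; simp
  rw [Finset.sum_congr rfl this]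
  simp [width]

def triv (p k : ℕ) : Fountain p where
  rows i := match i with | 0 => Finset.range k | _ + 1 => ∅
  bottom_consecutive := by simp
  supported := by intro i j hj; simp at hj

theorem triv_width (k : ℕ) : (triv p k).width = k := by simp [width, triv]

theorem triv_coins (k : ℕ) : (triv p k).coins = k := by
  unfold coins
  rw [Finset.sum_range_succ']
  simp [triv, triv_width]

end Fountain

open Fountain Finset

theorem fcount_small {p n k : ℕ} (hk : k ≤ p) :
    fcount p n k = if n = k then 1 else 0 := by
  unfold fcount
  split_ifs with h
  · subst h
    have hset : {F : Fountain p | F.coins = n ∧ F.width = n} = {triv p n} := by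
      ext F
      simp only [Set.mem_setOf_eq, Set.mem_singleton_iff]
      constructor
      · rintro ⟨hc, hw⟩
        apply Fountain.ext'
        funext i
        match i with
        | 0 => rw [F.rows_zero, hw]; rfl
        | i + 1 => rw [F.rows_succ_eq_empty_of_width_le (hw ▸ hk)]; rfl
      · rintro rfl
        exact ⟨triv_coins n, triv_width n⟩
    rw [hset, Set.ncard_singleton]
  · have hset : {F : Fountain p | F.coins = n ∧ F.width = k} = ∅ := by
      ext F
      simp only [Set.mem_setOf_eq, Set.mem_empty_iff_false, iff_false, not_and]
      intro hc hw
      exact h (by rw [← hc, F.coins_eq_width (hw ▸ hk), hw])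
    rw [hset, Set.ncard_empty]

theorem gcount_eq_zero_of_width_lt {p n k : ℕ} (hk : k < p) : gcount p n k = 0 := by
  unfold gcount
  convert Set.ncard_empty (Fountain p)
  ext F
  simp only [Set.mem_setOf_eq, Set.mem_empty_iff_false, iff_false, not_and]
  rintro ⟨hpw, _⟩ hc hw
  omega

theorem gcount_eq_zero_of_lt {p n k : ℕ} (hn : n < k) : gcount p n k = 0 := by
  unfold gcount
  convert Set.ncard_empty (Fountain p)
  ext F
  simp only [Set.mem_setOf_eq, Set.mem_empty_iff_false, iff_false, not_and]
  rintro _ hc hw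
  have := F.width_le_coins
  omega

theorem finite_width (p : ℕ) (hp : 1 ≤ p) (k : ℕ) :
    {F : Fountain p | F.width = k}.Finite := by
  have key : Set.InjOn (fun F : Fountain p =>
      (Finset.range (k+1) ×ˢ Finset.range k).filter (fun q => q.2 ∈ F.rows q.1))
      {F : Fountain p | F.width = k} := by
    intro F hF G hG h
    simp only [Set.mem_setOf_eq] at hF hG
    apply Fountain.ext'
    funext i
    by_cases hi : i < k
    · ext j
      constructor
      · intro hj
        have hjk : j < k := by
          have := F.rows_subset i hj
          simp only [Finset.mem_range] at this; omega
        have : (i, j) ∈ (Finset.range (k+1) ×ˢ Finset.range k).filter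
            (fun q => q.2 ∈ F.rows q.1) := by
          simp [hjk, hj]; omega
        rw [show (Finset.range (k+1) ×ˢ Finset.range k).filter (fun q => q.2 ∈ F.rows q.1)
            = (Finset.range (k+1) ×ˢ Finset.range k).filter (fun q => q.2 ∈ G.rows q.1)
            from h] at this
        simpa using (Finset.mem_filter.mp this).2
      · intro hj
        have hjk : j < k := by
          have := G.rows_subset i hj
          simp only [Finset.mem_range] at this; omega
        have : (i, j) ∈ (Finset.range (k+1) ×ˢ Finset.range k).filter
            (fun q => q.2 ∈ G.rows q.1) := by
          simp [hjk, hj]; omega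
        rw [← show (Finset.range (k+1) ×ˢ Finset.range k).filter (fun q => q.2 ∈ F.rows q.1)
            = (Finset.range (k+1) ×ˢ Finset.range k).filter (fun q => q.2 ∈ G.rows q.1)
            from h] at this
        simpa using (Finset.mem_filter.mp this).2
    · push_neg at hi
      rcases Nat.eq_zero_or_pos i with rfl | hi0
      · rw [F.rows_zero, G.rows_zero, hF, hG]
      · rw [F.rows_eq_empty hp (by omega) hi0, G.rows_eq_empty hp (by omega) hi0]
  have himg : ((fun F : Fountain p =>
      (Finset.range (k+1) ×ˢ Finset.range k).filter (fun q => q.2 ∈ F.rows q.1)) ''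
      {F : Fountain p | F.width = k}).Finite :=
    Set.Finite.subset ((Finset.range (k+1) ×ˢ Finset.range k).powerset.finite_toSet)
      (by rintro _ ⟨F, _, rfl⟩; simp only [Finset.mem_coe, Finset.mem_powerset]; exact Finset.filter_subset _ _)
  exact Set.Finite.of_finite_image himg key

theorem finite_S (p : ℕ) (hp : 1 ≤ p) (n k : ℕ) :
    {F : Fountain p | F.coins = n ∧ F.width = k}.Finite :=
  (finite_width p hp k).subset (fun F hF => hF.2)

namespace Fountain
variable {p : ℕ}

/-- The split lemma: if `s ∉ rows 1` then every coin in row `i+1` is either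
left of the gap (`j + i*p < s`) or right of it (`s + 1 ≤ j`). -/
theorem split_rows (F : Fountain p) {s : ℕ} (hs : s ∉ F.rows 1) :
    ∀ i j, j ∈ F.rows (i + 1) → j + i * p < s ∨ s + 1 ≤ j := by
  intro i
  induction i with
  | zero =>
    intro j hj
    have : j ≠ s := fun h => hs (h ▸ hj)
    omega
  | succ m ih =>
    intro j hj
    by_cases hr : s + 1 ≤ j
    · exact Or.inr hr
    · left
      have hjs : j ≤ s := by omega
      have hjp : j + p ∈ F.rows (m + 1) := F.supported (m + 1) j hj p le_rfl
      rcases ih (j + p) hjp with h | h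
      · have : (m + 1) * p = m * p + p := by ring
        omega
      · -- j ≤ s and j + p ≥ s + 1 : then s ∈ rows (m+1), contradiction via ih
        exfalso
        have hmem : s ∈ F.rows (m + 1) := by
          have := F.supported (m + 1) j hj (s - j) (by omega)
          rwa [show j + (s - j) = s by omega] at this
        rcases ih s hmem with h' | h' <;> omega

/-- Selector: the least position missing from row 1. -/
theorem sel_nonempty (F : Fountain p) :
    (Finset.range (F.width - p + 1) \ F.rows 1).Nonempty := by
  refine ⟨F.width - p, ?_⟩
  simp only [Finset.mem_sdiff, Finset.mem_range]
  refine ⟨by omega, fun h => ?_⟩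
  have := F.rows_subset 1 h
  simp only [Finset.mem_range, one_mul] at this
  omega

noncomputable def sel (F : Fountain p) : ℕ :=
  (Finset.range (F.width - p + 1) \ F.rows 1).min' F.sel_nonempty

theorem sel_spec (F : Fountain p) :
    F.sel ∈ Finset.range (F.width - p + 1) \ F.rows 1 :=
  Finset.min'_mem _ _

theorem sel_not_mem (F : Fountain p) : F.sel ∉ F.rows 1 :=
  (Finset.mem_sdiff.mp F.sel_spec).2

theorem sel_le (F : Fountain p) : F.sel ≤ F.width - p := by
  have := (Finset.mem_sdiff.mp F.sel_spec).1
  simp only [Finset.mem_range] at this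
  omega

theorem mem_of_lt_sel (F : Fountain p) {j : ℕ} (hj : j < F.sel) : j ∈ F.rows 1 := by
  by_contra h
  have hle := F.sel_le
  have : j ∈ Finset.range (F.width - p + 1) \ F.rows 1 := by
    simp only [Finset.mem_sdiff, Finset.mem_range]
    exact ⟨by omega, h⟩
  have h4 : F.sel ≤ j := Finset.min'_le _ _ this
  omega

theorem sel_eq (F : Fountain p) {s : ℕ} (h1 : s ∉ F.rows 1) (h2 : ∀ j < s, j ∈ F.rows 1)
    (h3 : s ≤ F.width - p) : F.sel = s := by
  apply le_antisymm
  · apply Finset.min'_le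
    simp only [Finset.mem_sdiff, Finset.mem_range]
    exact ⟨by omega, h1⟩
  · by_contra h
    push_neg at h
    exact F.sel_not_mem (h2 _ h)

/-- The left part of a fountain split at `s`. -/
def left (F : Fountain p) (s : ℕ) : Fountain p where
  rows i := match i with
    | 0 => Finset.range (s + p)
    | j + 1 => F.rows (j + 1) ∩ Finset.range (s - j * p)
  bottom_consecutive := by simp
  supported := by
    intro i j hj d hd
    match i with
    | 0 =>
      simp only [Finset.mem_inter, Finset.mem_range] at hj ⊢
      omega
    | m + 1 =>
      simp only [Finset.mem_inter, Finset.mem_range] at hj ⊢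
      refine ⟨F.supported (m + 1) j hj.1 d hd, ?_⟩
      have h2 := hj.2
      have : (m + 1) * p = m * p + p := by ring
      omega

theorem left_width (F : Fountain p) (s : ℕ) : (F.left s).width = s + p := by
  simp [width, left]

/-- The right part of a fountain split at `s`. -/
def right (F : Fountain p) (s : ℕ) : Fountain p where
  rows i := match i with
    | 0 => Finset.range (F.width - s - 1)
    | j + 1 => ((F.rows (j + 1)).filter (fun x => s + 1 ≤ x)).image (fun x => x - (s + 1))
  bottom_consecutive := by simp
  supported := by
    intro i j hj d hd
    match i with
    | 0 =>
      simp only [Finset.mem_image, Finset.mem_filter, Finset.mem_range] at hj ⊢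
      obtain ⟨x, ⟨hx, hxs⟩, rfl⟩ := hj
      have hxd : x + d ∈ F.rows 0 := F.supported 0 x hx d hd
      rw [F.rows_zero, Finset.mem_range] at hxd
      omega
    | m + 1 =>
      simp only [Finset.mem_image, Finset.mem_filter] at hj ⊢
      obtain ⟨x, ⟨hx, hxs⟩, rfl⟩ := hj
      exact ⟨x + d, ⟨F.supported (m + 1) x hx d hd, by omega⟩, by omega⟩

theorem right_width (F : Fountain p) (s : ℕ) : (F.right s).width = F.width - s - 1 := by
  simp [width, right]

/-- Gluing a primitive fountain `L` of width `s + p` to a fountain `R`, overlapping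
the last `p - 1` bottom coins of `L` with the first of `R`. -/
def glue (s : ℕ) (L R : Fountain p) (hL : L.width = s + p) (hR : p ≤ R.width + 1) :
    Fountain p where
  rows i := match i with
    | 0 => Finset.range (s + 1 + R.width)
    | j + 1 => L.rows (j + 1) ∪ (R.rows (j + 1)).image (fun x => x + (s + 1))
  bottom_consecutive := by simp
  supported := by
    intro i j hj d hd
    match i with
    | 0 =>
      simp only [Finset.mem_union, Finset.mem_image, Finset.mem_range] at hj ⊢
      rcases hj with hj | ⟨x, hx, rfl⟩
      · have := L.rows_subset 1 hj
        simp only [Finset.mem_range, one_mul, hL] at this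
        omega
      · have := R.rows_subset 1 hx
        simp only [Finset.mem_range, one_mul] at this
        omega
    | m + 1 =>
      simp only [Finset.mem_union, Finset.mem_image] at hj ⊢
      rcases hj with hj | ⟨x, hx, rfl⟩
      · exact Or.inl (L.supported (m + 1) j hj d hd)
      · exact Or.inr ⟨x + d, R.supported (m + 1) x hx d hd, by omega⟩

theorem glue_width (s : ℕ) (L R : Fountain p) (hL : L.width = s + p) (hR : p ≤ R.width + 1) :
    (glue s L R hL hR).width = s + 1 + R.width := by
  simp [width, glue]

theorem prim_rows_subset {L : Fountain p} (hP : L.Primitive) :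
    ∀ i, L.rows (i + 1) ⊆ Finset.range (L.width - p - i * p) := by
  intro i
  induction i with
  | zero => simpa using hP.2.le
  | succ m ih =>
    intro j hj
    have h1 : j + p ∈ L.rows (m + 1) := L.supported (m + 1) j hj p le_rfl
    have h2 := ih h1
    simp only [Finset.mem_range] at h2 ⊢
    have : (m + 1) * p = m * p + p := by ring
    omega

end Fountain

namespace Fountain
variable {p : ℕ}

theorem glue_left_right (hp : 1 ≤ p) (F : Fountain p) {s : ℕ} (hs : s ∉ F.rows 1)
    (hsw : s + p ≤ F.width) (h1 : (F.left s).width = s + p) (h2 : p ≤ (F.right s).width + 1) :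
    glue s (F.left s) (F.right s) h1 h2 = F := by
  apply Fountain.ext'
  funext i
  match i with
  | 0 =>
    show Finset.range (s + 1 + (F.right s).width) = F.rows 0
    rw [right_width, F.rows_zero]
    congr 1
    omega
  | i + 1 =>
    show (F.left s).rows (i + 1) ∪ ((F.right s).rows (i + 1)).image (fun x => x + (s + 1))
        = F.rows (i + 1)
    ext j
    simp only [left, right, Finset.mem_union, Finset.mem_inter, Finset.mem_range,
      Finset.mem_image, Finset.mem_filter]
    constructor
    · rintro (⟨hj, _⟩ | ⟨x, ⟨⟨y, ⟨hy, hys⟩, rfl⟩, rfl⟩⟩)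
      · exact hj
      · rwa [show y - (s + 1) + (s + 1) = y by omega]
    · intro hj
      rcases F.split_rows hs i j hj with h | h
      · exact Or.inl ⟨hj, by omega⟩
      · exact Or.inr ⟨j - (s + 1), ⟨j, ⟨hj, h⟩, rfl⟩, by omega⟩

theorem left_glue (hp : 1 ≤ p) {s : ℕ} (L R : Fountain p) (hP : L.Primitive)
    (hL : L.width = s + p) (hR : p ≤ R.width + 1) :
    (glue s L R hL hR).left s = L := by
  apply Fountain.ext'
  funext i
  match i with
  | 0 =>
    show Finset.range (s + p) = L.rows 0
    rw [L.rows_zero, hL]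
  | i + 1 =>
    show ((glue s L R hL hR).rows (i + 1)) ∩ Finset.range (s - i * p) = L.rows (i + 1)
    ext j
    simp only [glue, Finset.mem_inter, Finset.mem_union, Finset.mem_image, Finset.mem_range]
    constructor
    · rintro ⟨hj | ⟨x, hx, rfl⟩, hjr⟩
      · exact hj
      · omega
    · intro hj
      have := prim_rows_subset hP i hj
      simp only [Finset.mem_range, hL] at this
      exact ⟨Or.inl hj, by omega⟩

theorem right_glue (hp : 1 ≤ p) {s : ℕ} (L R : Fountain p) (hP : L.Primitive)
    (hL : L.width = s + p) (hR : p ≤ R.width + 1) :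
    (glue s L R hL hR).right s = R := by
  apply Fountain.ext'
  funext i
  match i with
  | 0 =>
    show Finset.range ((glue s L R hL hR).width - s - 1) = R.rows 0
    rw [glue_width, R.rows_zero]
    congr 1
    omega
  | i + 1 =>
    show (((glue s L R hL hR).rows (i + 1)).filter (fun x => s + 1 ≤ x)).image
        (fun x => x - (s + 1)) = R.rows (i + 1)
    ext j
    simp only [glue, Finset.mem_image, Finset.mem_filter, Finset.mem_union]
    constructor
    · rintro ⟨x, ⟨hx | ⟨y, hy, rfl⟩, hxs⟩, rfl⟩
      · exfalso
        have := prim_rows_subset hP i hx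
        simp only [Finset.mem_range, hL] at this
        omega
      · rwa [show y + (s + 1) - (s + 1) = y by omega]
    · intro hj
      exact ⟨j + (s + 1), ⟨Or.inr ⟨j, hj, rfl⟩, by omega⟩, by omega⟩

theorem rows_card_split (F : Fountain p) {s : ℕ} (hs : s ∉ F.rows 1) (i : ℕ) :
    ((F.left s).rows (i + 1)).card + ((F.right s).rows (i + 1)).card
      = (F.rows (i + 1)).card := by
  have hL : (F.left s).rows (i + 1) = F.rows (i + 1) ∩ Finset.range (s - i * p) := rfl
  have hRcard : ((F.right s).rows (i + 1)).card
      = ((F.rows (i + 1)).filter (fun x => s + 1 ≤ x)).card := by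
    show (((F.rows (i + 1)).filter (fun x => s + 1 ≤ x)).image (fun x => x - (s + 1))).card = _
    apply Finset.card_image_of_injOn
    intro a ha b hb hab
    simp only [Finset.mem_coe, Finset.mem_filter] at ha hb
    have hab' : a - (s + 1) = b - (s + 1) := hab
    omega
  rw [hL, hRcard]
  rw [← Finset.card_union_of_disjoint]
  · congr 1
    ext j
    simp only [Finset.mem_union, Finset.mem_inter, Finset.mem_range, Finset.mem_filter]
    constructor
    · rintro (⟨hj, _⟩ | ⟨hj, _⟩) <;> exact hj
    · intro hj
      rcases F.split_rows hs i j hj with h | h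
      · exact Or.inl ⟨hj, by omega⟩
      · exact Or.inr ⟨hj, h⟩
  · rw [Finset.disjoint_left]
    intro a ha hb
    have ha' := (Finset.mem_inter.mp ha).2
    simp only [Finset.mem_range] at ha'
    have := (Finset.mem_filter.mp hb).2
    omega

theorem coins_split (hp : 1 ≤ p) (F : Fountain p) {s : ℕ} (hs : s ∉ F.rows 1)
    (hsw : s + p ≤ F.width) :
    (F.left s).coins + (F.right s).coins = F.coins + (p - 1) := by
  have hLw : (F.left s).width = s + p := left_width F s
  have hRw : (F.right s).width = F.width - s - 1 := right_width F s
  have hL := (F.left s).coins_eq hp (N := F.width) (by omega)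
  have hR := (F.right s).coins_eq hp (N := F.width) (by omega)
  have hF := F.coins_eq hp (N := F.width) le_rfl
  have hsum : ∑ i ∈ Finset.range F.width, ((F.left s).rows (i + 1)).card
      + ∑ i ∈ Finset.range F.width, ((F.right s).rows (i + 1)).card
      = ∑ i ∈ Finset.range F.width, (F.rows (i + 1)).card := by
    rw [← Finset.sum_add_distrib]
    exact Finset.sum_congr rfl (fun i _ => F.rows_card_split hs i)
  rw [hL, hR, hF, hLw, hRw]
  omega

end Fountain

namespace Fountain
variable {p : ℕ}

def popRow (F : Fountain p) (h : F.rows 1 = Finset.range (F.rows 1).card) : Fountain p where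
  rows i := F.rows (i + 1)
  bottom_consecutive := h
  supported := fun i j hj d hd => F.supported (i + 1) j hj d hd

theorem popRow_width (F : Fountain p) (h) : (F.popRow h).width = (F.rows 1).card := rfl

theorem popRow_coins (hp : 1 ≤ p) (F : Fountain p) (h) :
    (F.popRow h).coins + F.width = F.coins := by
  have hw : (F.popRow h).width ≤ F.width := by
    rw [popRow_width]
    have := Finset.card_le_card (F.rows_subset 1)
    rw [Finset.card_range] at this
    omega
  have h1 := (F.popRow h).coins_eq hp (N := F.width) hw
  have h2 := F.coins_eq hp (N := F.width + 1) (by omega)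
  rw [Finset.sum_range_succ'] at h2
  have hrows : ∀ i, (F.popRow h).rows i = F.rows (i + 1) := fun _ => rfl
  simp only [Nat.zero_add] at h2
  rw [h1, h2, popRow_width]
  simp only [hrows]
  omega

def pushRow (R : Fountain p) (k : ℕ) (hk : R.width + p ≤ k) : Fountain p where
  rows i := match i with
    | 0 => Finset.range k
    | j + 1 => R.rows j
  bottom_consecutive := by simp
  supported := by
    intro i j hj d hd
    match i with
    | 0 =>
      -- hj : j ∈ R.rows 0
      have := R.rows_subset 0 hj
      simp only [Finset.mem_range, Nat.mul_zero, Nat.zero_mul, Nat.sub_zero] at this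
      simp only [Finset.mem_range]
      omega
    | m + 1 => exact R.supported m j hj d hd

theorem pushRow_width (R : Fountain p) (k : ℕ) (hk) : (R.pushRow k hk).width = k := by
  simp [width, pushRow]

end Fountain

open Fountain in
theorem gcount_eq (p : ℕ) (hp : 1 ≤ p) (n k : ℕ) (hpk : p ≤ k) (hkn : k ≤ n) :
    gcount p n k = fcount p (n - k) (k - p) := by
  unfold gcount fcount
  rw [← Nat.card_coe_set_eq, ← Nat.card_coe_set_eq]
  apply Nat.card_congr
  refine
    { toFun := fun F => ⟨F.1.popRow ?_, ?_, ?_⟩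
      invFun := fun R => ⟨R.1.pushRow k ?_, ?_, ?_, ?_⟩
      left_inv := ?_
      right_inv := ?_ }
  · -- rows 1 consecutive
    obtain ⟨hF, _, _⟩ := F.2
    rw [hF.2, Finset.card_range]
  · -- coins of popRow = n - k
    obtain ⟨hF, hc, hw⟩ := F.2
    have := popRow_coins hp F.1 (by rw [hF.2, Finset.card_range])
    omega
  · -- width of popRow = k - p
    obtain ⟨hF, hc, hw⟩ := F.2
    rw [popRow_width, hF.2, Finset.card_range, hw]
  · -- pushRow hypothesis
    obtain ⟨hc, hw⟩ := R.2
    omega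
  · -- primitive
    obtain ⟨hc, hw⟩ := R.2
    refine ⟨by rw [pushRow_width]; omega, ?_⟩
    show R.1.rows 0 = Finset.range ((R.1.pushRow k _).width - p)
    rw [R.1.rows_zero, pushRow_width, hw]
  · -- coins
    obtain ⟨hc, hw⟩ := R.2
    have hpop : (R.1.pushRow k (by omega)).popRow (by
        show R.1.rows 0 = Finset.range ((R.1.rows 0).card)
        exact R.1.rows_zero) = R.1 := by
      apply Fountain.ext'
      funext i
      rfl
    have := popRow_coins hp (R.1.pushRow k (by omega)) (by
        show R.1.rows 0 = Finset.range ((R.1.rows 0).card)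
        exact R.1.rows_zero)
    rw [hpop] at this
    rw [pushRow_width] at this
    omega
  · -- width
    exact pushRow_width _ _ _
  · -- left_inv
    rintro ⟨F, hF⟩
    apply Subtype.ext
    apply Fountain.ext'
    funext i
    match i with
    | 0 =>
      show Finset.range k = F.rows 0
      rw [F.rows_zero, hF.2.2]
    | i + 1 => rfl
  · -- right_inv
    rintro ⟨R, hR⟩
    apply Subtype.ext
    apply Fountain.ext'
    funext i
    rfl

namespace Fountain
variable {p : ℕ}

theorem left_primitive (F : Fountain p) (s : ℕ) (h2 : ∀ j < s, j ∈ F.rows 1) :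
    (F.left s).Primitive := by
  constructor
  · rw [left_width]; omega
  · show F.rows 1 ∩ Finset.range (s - 0 * p) = Finset.range ((F.left s).width - p)
    rw [left_width]
    ext j
    simp only [Finset.mem_inter, Finset.mem_range, Nat.zero_mul, Nat.sub_zero,
      Nat.add_sub_cancel]
    exact ⟨fun h => h.2, fun h => ⟨h2 j h, h⟩⟩

theorem glue_rows_one (s : ℕ) (L R : Fountain p) (hL : L.width = s + p) (hR : p ≤ R.width + 1) :
    (glue s L R hL hR).rows 1 = L.rows 1 ∪ (R.rows 1).image (fun x => x + (s + 1)) := rfl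

end Fountain

open Fountain in
theorem fiber_card (p : ℕ) (hp : 1 ≤ p) (n k a0 b0 a1 b1 : ℕ)
    (hn : a0 + b0 = n) (hk : a1 + b1 = k) (hpk : p ≤ k) :
    Set.ncard {F : Fountain p | (F.coins = n ∧ F.width = k) ∧
        (F.left F.sel).coins = a0 + (p - 1) ∧ F.sel + 1 = a1}
      = gcount p (a0 + (p - 1)) (a1 + (p - 1)) *
        (if p - 1 ≤ b1 then fcount p b0 b1 else 0) := by
  rcases Nat.eq_zero_or_pos a1 with rfl | ha1
  · rw [gcount_eq_zero_of_width_lt (by omega), zero_mul]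
    convert Set.ncard_empty (Fountain p)
    ext F
    simp only [Set.mem_setOf_eq, Set.mem_empty_iff_false, iff_false]
    rintro ⟨_, _, h⟩
    omega
  by_cases hb1 : p - 1 ≤ b1
  swap
  · rw [if_neg hb1, mul_zero]
    convert Set.ncard_empty (Fountain p)
    ext F
    simp only [Set.mem_setOf_eq, Set.mem_empty_iff_false, iff_false]
    rintro ⟨⟨_, hw⟩, _, hsel⟩
    have := F.sel_le
    omega
  rw [if_pos hb1]
  unfold gcount fcount
  rw [← Nat.card_coe_set_eq, ← Nat.card_coe_set_eq, ← Nat.card_coe_set_eq,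
    ← Nat.card_prod]
  apply Nat.card_congr
  refine
    { toFun := fun F => (⟨F.1.left (a1 - 1), ?_, ?_, ?_⟩, ⟨F.1.right (a1 - 1), ?_, ?_⟩)
      invFun := fun LR => ⟨glue (a1 - 1) LR.1.1 LR.2.1
        (by have := LR.1.2.2.2; rw [this]; omega)
        (by have := LR.2.2.2; omega), ⟨?_, ?_⟩, ?_, ?_⟩
      left_inv := ?_
      right_inv := ?_ }
  · -- left primitive
    obtain ⟨⟨hc, hw⟩, hcl, hsel⟩ := F.2
    exact F.1.left_primitive (a1 - 1) (fun j hj => F.1.mem_of_lt_sel (by omega))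
  · -- left coins
    obtain ⟨⟨hc, hw⟩, hcl, hsel⟩ := F.2
    rwa [show a1 - 1 = F.1.sel by omega]
  · -- left width
    rw [left_width]; omega
  · -- right coins
    obtain ⟨⟨hc, hw⟩, hcl, hsel⟩ := F.2
    have hsel' : F.1.sel = a1 - 1 := by omega
    have hsplit := coins_split hp F.1 (s := a1 - 1)
      (hsel' ▸ F.1.sel_not_mem) (by have := F.1.sel_le; omega)
    rw [hsel'] at hcl
    omega
  · -- right width
    obtain ⟨⟨hc, hw⟩, hcl, hsel⟩ := F.2
    rw [right_width]; omega
  · -- glue coins = n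
    obtain ⟨⟨L, hLP, hLc, hLw⟩, ⟨R, hRc, hRw⟩⟩ := LR
    dsimp only
    have hL : L.width = (a1 - 1) + p := by rw [hLw]; omega
    have hR : p ≤ R.width + 1 := by omega
    have hs : (a1 - 1) ∉ (glue (a1-1) L R hL hR).rows 1 := by
      rw [glue_rows_one]
      simp only [Finset.mem_union, Finset.mem_image, not_or, not_exists]
      constructor
      · rw [hLP.2, hL]
        simp only [Finset.mem_range]
        omega
      · intro x
        rintro ⟨_, hx⟩
        omega
    have hsw : (a1 - 1) + p ≤ (glue (a1-1) L R hL hR).width := by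
      rw [glue_width]; omega
    have hsplit := coins_split hp (glue (a1-1) L R hL hR) hs hsw
    rw [left_glue hp L R hLP hL hR, right_glue hp L R hLP hL hR] at hsplit
    omega
  · -- glue width = k
    obtain ⟨⟨L, hLP, hLc, hLw⟩, ⟨R, hRc, hRw⟩⟩ := LR
    dsimp only
    rw [glue_width]; omega
  · -- glue sel coins
    obtain ⟨⟨L, hLP, hLc, hLw⟩, ⟨R, hRc, hRw⟩⟩ := LR
    dsimp only
    have hL : L.width = (a1 - 1) + p := by rw [hLw]; omega
    have hR : p ≤ R.width + 1 := by omega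
    have hs : (a1 - 1) ∉ (glue (a1-1) L R hL hR).rows 1 := by
      rw [glue_rows_one]
      simp only [Finset.mem_union, Finset.mem_image, not_or, not_exists]
      constructor
      · rw [hLP.2, hL]
        simp only [Finset.mem_range]
        omega
      · intro x
        rintro ⟨_, hx⟩
        omega
    have hsel : (glue (a1-1) L R hL hR).sel = a1 - 1 := by
      apply sel_eq _ hs
      · intro j hj
        rw [glue_rows_one]
        apply Finset.mem_union_left
        rw [hLP.2, hL]
        simp only [Finset.mem_range]
        omega
      · rw [glue_width]; omega
    rw [hsel, left_glue hp L R hLP hL hR]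
    exact hLc
  · -- glue sel value
    obtain ⟨⟨L, hLP, hLc, hLw⟩, ⟨R, hRc, hRw⟩⟩ := LR
    dsimp only
    have hL : L.width = (a1 - 1) + p := by rw [hLw]; omega
    have hR : p ≤ R.width + 1 := by omega
    have hs : (a1 - 1) ∉ (glue (a1-1) L R hL hR).rows 1 := by
      rw [glue_rows_one]
      simp only [Finset.mem_union, Finset.mem_image, not_or, not_exists]
      constructor
      · rw [hLP.2, hL]
        simp only [Finset.mem_range]
        omega
      · intro x
        rintro ⟨_, hx⟩
        omega
    have hsel : (glue (a1-1) L R hL hR).sel = a1 - 1 := by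
      apply sel_eq _ hs
      · intro j hj
        rw [glue_rows_one]
        apply Finset.mem_union_left
        rw [hLP.2, hL]
        simp only [Finset.mem_range]
        omega
      · rw [glue_width]; omega
    omega
  · -- left_inv
    rintro ⟨F, hF⟩
    obtain ⟨⟨hc, hw⟩, hcl, hsel⟩ := hF
    apply Subtype.ext
    exact glue_left_right hp F (show a1 - 1 ∉ F.rows 1 from
        (show F.sel = a1 - 1 by omega) ▸ F.sel_not_mem)
      (by have := F.sel_le; omega) (left_width F _)
      (by rw [right_width]; have := F.sel_le; omega)
  · -- right_inv
    rintro ⟨⟨L, hLP, hLc, hLw⟩, ⟨R, hRc, hRw⟩⟩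
    dsimp only
    have hL : L.width = (a1 - 1) + p := by rw [hLw]; omega
    have hR : p ≤ R.width + 1 := by omega
    ext : 1
    · apply Subtype.ext
      exact left_glue hp L R hLP hL hR
    · apply Subtype.ext
      exact right_glue hp L R hLP hL hR

open Fountain in
noncomputable def classify (p : ℕ) (F : Fountain p) : (ℕ × ℕ) × (ℕ × ℕ) :=
  (((F.left F.sel).coins - (p - 1), F.coins - ((F.left F.sel).coins - (p - 1))),
   (F.sel + 1, F.width - (F.sel + 1)))

open Fountain in
theorem main_rec (p : ℕ) (hp : 1 ≤ p) (n k : ℕ) (hk : p ≤ k) :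
    fcount p n k = ∑ x ∈ Finset.HasAntidiagonal.antidiagonal n ×ˢ Finset.HasAntidiagonal.antidiagonal k,
      gcount p (x.1.1 + (p - 1)) (x.2.1 + (p - 1)) *
        (if p - 1 ≤ x.2.2 then fcount p x.1.2 x.2.2 else 0) := by
  classical
  have hS : {F : Fountain p | F.coins = n ∧ F.width = k}.Finite := finite_S p hp n k
  have key : ∀ F : Fountain p, F.coins = n → F.width = k →
      (F.left F.sel).coins ≤ n + (p - 1) ∧ p - 1 ≤ (F.left F.sel).coins ∧ F.sel + 1 ≤ k := by
    intro F hc hw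
    have hsplit := coins_split hp F F.sel_not_mem (by have := F.sel_le; omega)
    have hwl := left_width F F.sel
    have hcl := (F.left F.sel).width_le_coins
    have := F.sel_le
    omega
  have : fcount p n k = hS.toFinset.card := by
    rw [fcount, Set.ncard_eq_toFinset_card _ hS]
  rw [this]
  rw [Finset.card_eq_sum_card_fiberwise (f := classify p)
    (t := Finset.HasAntidiagonal.antidiagonal n ×ˢ Finset.HasAntidiagonal.antidiagonal k) ?_]
  · apply Finset.sum_congr rfl
    intro x hx
    simp only [Finset.mem_product, Finset.HasAntidiagonal.mem_antidiagonal] at hx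
    rw [← Set.ncard_coe_finset]
    have hfib : (↑(hS.toFinset.filter fun F => classify p F = x) : Set (Fountain p))
        = {F : Fountain p | (F.coins = n ∧ F.width = k) ∧
            (F.left F.sel).coins = x.1.1 + (p - 1) ∧ F.sel + 1 = x.2.1} := by
      ext F
      simp only [Finset.coe_filter, Set.Finite.mem_toFinset, Set.mem_setOf_eq, classify,
        Prod.mk.injEq, Prod.ext_iff]
      constructor
      · rintro ⟨⟨hc, hw⟩, ⟨h1, h2⟩, h3, h4⟩
        obtain ⟨k1, k2, k3⟩ := key F hc hw
        exact ⟨⟨hc, hw⟩, by omega, by omega⟩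
      · rintro ⟨⟨hc, hw⟩, h1, h2⟩
        obtain ⟨k1, k2, k3⟩ := key F hc hw
        refine ⟨⟨hc, hw⟩, ⟨by omega, by omega⟩, by omega, by omega⟩
    rw [hfib]
    exact fiber_card p hp n k x.1.1 x.1.2 x.2.1 x.2.2 hx.1 hx.2 hk
  · intro F hF
    rw [Finset.mem_coe, Set.Finite.mem_toFinset] at hF
    obtain ⟨hc, hw⟩ := hF
    obtain ⟨k1, k2, k3⟩ := key F hc hw
    simp only [Finset.mem_coe, Finset.mem_product, Finset.HasAntidiagonal.mem_antidiagonal, classify]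
    omega

open MvPowerSeries Finsupp

theorem XX_pow (m : ℕ) : ((X 0 * X 1 : MvPowerSeries (Fin 2) ℚ)) ^ m
    = monomial (Finsupp.single 0 m + Finsupp.single 1 m) 1 := by
  rw [mul_pow, X_pow_eq, X_pow_eq, monomial_mul_monomial, one_mul]

theorem ee_apply0 (m : ℕ) : (Finsupp.single 0 m + Finsupp.single 1 m : Fin 2 →₀ ℕ) 0 = m := by
  simp [Finsupp.single_apply]

theorem ee_apply1 (m : ℕ) : (Finsupp.single 0 m + Finsupp.single 1 m : Fin 2 →₀ ℕ) 1 = m := by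
  simp [Finsupp.single_apply]

theorem ee_le (m : ℕ) (d : Fin 2 →₀ ℕ) :
    (Finsupp.single 0 m + Finsupp.single 1 m : Fin 2 →₀ ℕ) ≤ d ↔ m ≤ d 0 ∧ m ≤ d 1 := by
  rw [Finsupp.le_def, Fin.forall_fin_two, ee_apply0, ee_apply1]

theorem ee_eq (m : ℕ) (d : Fin 2 →₀ ℕ) :
    d = (Finsupp.single 0 m + Finsupp.single 1 m : Fin 2 →₀ ℕ) ↔ d 0 = m ∧ d 1 = m := by
  rw [Finsupp.ext_iff, Fin.forall_fin_two, ee_apply0, ee_apply1]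

theorem ee_sub0 (m : ℕ) (d : Fin 2 →₀ ℕ) :
    (d - (Finsupp.single 0 m + Finsupp.single 1 m : Fin 2 →₀ ℕ)) 0 = d 0 - m := by
  rw [Finsupp.tsub_apply, ee_apply0]

theorem ee_sub1 (m : ℕ) (d : Fin 2 →₀ ℕ) :
    (d - (Finsupp.single 0 m + Finsupp.single 1 m : Fin 2 →₀ ℕ)) 1 = d 1 - m := by
  rw [Finsupp.tsub_apply, ee_apply1]

theorem gcount_le_of_ne_zero {p n k : ℕ} (h : gcount p n k ≠ 0) : p ≤ k ∧ k ≤ n := by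
  constructor
  · by_contra hc; exact h (gcount_eq_zero_of_width_lt (by omega))
  · by_contra hc; exact h (gcount_eq_zero_of_lt (by omega))

theorem part1 (p : ℕ) (hp : 1 ≤ p) :
    Ggf p = (X 0 * X 1) ^ (p - 1) * Gshift p := by
  ext d
  rw [XX_pow, coeff_monomial_mul, coeff_apply, coeff_apply]
  show (gcount p (d 0) (d 1) : ℚ) = _
  split_ifs with h
  · rw [ee_le] at h
    show _ = 1 * ((gcount p ((d - _) 0 + (p - 1)) ((d - _) 1 + (p - 1)) : ℕ) : ℚ)
    rw [one_mul, ee_sub0, ee_sub1,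
      show d 0 - (p - 1) + (p - 1) = d 0 by omega,
      show d 1 - (p - 1) + (p - 1) = d 1 by omega]
  · rw [ee_le] at h
    by_cases hz : gcount p (d 0) (d 1) = 0
    · rw [hz]; norm_num
    · obtain ⟨h1, h2⟩ := gcount_le_of_ne_zero hz
      omega

theorem part2 (p : ℕ) (hp : 1 ≤ p) :
    Ggf p = (X 0 * X 1) ^ p * Fqz p := by
  ext d
  rw [XX_pow, coeff_monomial_mul, coeff_apply, coeff_apply]
  show (gcount p (d 0) (d 1) : ℚ) = _
  split_ifs with h
  · rw [ee_le] at h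
    show _ = 1 * (if (d - _) 1 ≤ (d - _) 0 then
        ((fcount p ((d - _) 0 - (d - _) 1) ((d - _) 1) : ℕ) : ℚ) else 0)
    rw [one_mul, ee_sub0, ee_sub1]
    split_ifs with h2
    · rw [gcount_eq p hp (d 0) (d 1) h.2 (by omega),
        show d 0 - p - (d 1 - p) = d 0 - d 1 by omega,
        show d 1 - p = d 1 - p from rfl]
    · rw [gcount_eq_zero_of_lt (by omega)]
      norm_num
  · rw [ee_le] at h
    by_cases hz : gcount p (d 0) (d 1) = 0
    · rw [hz]; norm_num
    · obtain ⟨h1, h2⟩ := gcount_le_of_ne_zero hz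
      omega

theorem coeff_geom (m : ℕ) (d : Fin 2 →₀ ℕ) :
    MvPowerSeries.coeff d (∑ i ∈ Finset.range m, (X 0 * X 1 : MvPowerSeries (Fin 2) ℚ) ^ i)
      = if d 0 = d 1 ∧ d 0 < m then 1 else 0 := by
  rw [map_sum]
  have step : ∀ i, MvPowerSeries.coeff d ((X 0 * X 1 : MvPowerSeries (Fin 2) ℚ) ^ i)
      = if i = d 0 ∧ d 1 = d 0 then 1 else 0 := by
    intro i
    rw [XX_pow, coeff_monomial]
    refine if_congr ?_ rfl rfl
    rw [ee_eq]
    constructor <;> (rintro ⟨h1, h2⟩; constructor <;> omega)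
  simp_rw [step]
  by_cases hd : d 1 = d 0
  · have hsimp : ∀ i, (if i = d 0 ∧ d 1 = d 0 then (1:ℚ) else 0) = if i = d 0 then 1 else 0 :=
      fun i => by simp [hd]
    simp_rw [hsimp]
    rw [Finset.sum_ite_eq' (Finset.range m) (d 0) (fun _ => (1 : ℚ))]
    by_cases hlt : d 0 < m
    · rw [if_pos (Finset.mem_range.mpr hlt), if_pos ⟨hd.symm, hlt⟩]
    · rw [if_neg (fun hc => hlt (Finset.mem_range.mp hc)), if_neg (by tauto)]
  · rw [if_neg (by tauto)]
    apply Finset.sum_eq_zero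
    intro i _
    rw [if_neg (by tauto)]

theorem delta_rw (p : ℕ) (hp : 1 ≤ p) (b0 b1 : ℕ) :
    (fcount p b0 b1 : ℚ) - (if b0 = b1 ∧ b0 < p - 1 then 1 else 0)
      = ((if p - 1 ≤ b1 then fcount p b0 b1 else 0 : ℕ) : ℚ) := by
  by_cases h : p - 1 ≤ b1
  · rw [if_pos h, if_neg (by rintro ⟨rfl, h2⟩; omega), sub_zero]
  · rw [if_neg h, fcount_small (show b1 ≤ p by omega)]
    by_cases hb : b0 = b1
    · rw [if_pos hb, if_pos ⟨hb, by omega⟩]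
      norm_num
    · rw [if_neg hb, if_neg (by tauto)]
      norm_num

theorem two_apply0 (a b : ℕ) : (Finsupp.single 0 a + Finsupp.single 1 b : Fin 2 →₀ ℕ) 0 = a := by
  simp [Finsupp.single_apply]

theorem two_apply1 (a b : ℕ) : (Finsupp.single 0 a + Finsupp.single 1 b : Fin 2 →₀ ℕ) 1 = b := by
  simp [Finsupp.single_apply]

open Fountain in
theorem full_identity (p : ℕ) (hp : 1 ≤ p) (n k : ℕ) :
    (fcount p n k : ℚ) = (if n = k ∧ n < p then 1 else 0)
      + ∑ y ∈ Finset.HasAntidiagonal.antidiagonal n ×ˢ Finset.HasAntidiagonal.antidiagonal k,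
          ((gcount p (y.1.1 + (p - 1)) (y.2.1 + (p - 1)) : ℚ) *
            ((if p - 1 ≤ y.2.2 then fcount p y.1.2 y.2.2 else 0 : ℕ) : ℚ)) := by
  by_cases hk : p ≤ k
  · rw [if_neg (by rintro ⟨rfl, h2⟩; omega), zero_add]
    rw [main_rec p hp n k hk]
    push_cast
    rfl
  · have hsum : ∀ y ∈ Finset.HasAntidiagonal.antidiagonal n ×ˢ Finset.HasAntidiagonal.antidiagonal k,
        ((gcount p (y.1.1 + (p - 1)) (y.2.1 + (p - 1)) : ℚ) *
          ((if p - 1 ≤ y.2.2 then fcount p y.1.2 y.2.2 else 0 : ℕ) : ℚ)) = 0 := by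
      intro y hy
      simp only [Finset.mem_product, Finset.HasAntidiagonal.mem_antidiagonal] at hy
      by_cases hg : gcount p (y.1.1 + (p - 1)) (y.2.1 + (p - 1)) = 0
      · rw [hg]; norm_num
      · obtain ⟨h1, h2⟩ := gcount_le_of_ne_zero hg
        rw [if_neg (by omega)]
        norm_num
    rw [Finset.sum_congr rfl hsum, Finset.sum_const, smul_zero, add_zero]
    rw [fcount_small (show k ≤ p by omega)]
    by_cases hnk : n = k
    · rw [if_pos hnk, if_pos ⟨hnk, by omega⟩]; norm_num
    · rw [if_neg hnk, if_neg (by tauto)]; norm_num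

open Fountain in
theorem full_identity_d (p : ℕ) (hp : 1 ≤ p) (d : Fin 2 →₀ ℕ) :
    (fcount p (d 0) (d 1) : ℚ) = (if d 0 = d 1 ∧ d 0 < p then 1 else 0)
      + ∑ x ∈ (Finset.HasAntidiagonal.antidiagonal d : Finset ((Fin 2 →₀ ℕ) × (Fin 2 →₀ ℕ))),
          ((gcount p (x.1 0 + (p - 1)) (x.1 1 + (p - 1)) : ℚ) *
            ((if p - 1 ≤ x.2 1 then fcount p (x.2 0) (x.2 1) else 0 : ℕ) : ℚ)) := by
  rw [full_identity p hp (d 0) (d 1)]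
  congr 1
  apply Finset.sum_nbij'
    (i := fun y => ((Finsupp.single 0 y.1.1 + Finsupp.single 1 y.2.1 : Fin 2 →₀ ℕ),
      (Finsupp.single 0 y.1.2 + Finsupp.single 1 y.2.2 : Fin 2 →₀ ℕ)))
    (j := fun x => ((x.1 0, x.2 0), (x.1 1, x.2 1)))
  · intro y hy
    simp only [Finset.mem_product, Finset.HasAntidiagonal.mem_antidiagonal] at hy
    rw [Finset.HasAntidiagonal.mem_antidiagonal]
    ext a
    rw [Finsupp.add_apply]
    match a with
    | 0 => rw [two_apply0, two_apply0]; exact hy.1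
    | 1 => rw [two_apply1, two_apply1]; exact hy.2
  · intro x hx
    rw [Finset.HasAntidiagonal.mem_antidiagonal] at hx
    simp only [Finset.mem_product, Finset.HasAntidiagonal.mem_antidiagonal]
    constructor
    · rw [← Finsupp.add_apply, hx]
    · rw [← Finsupp.add_apply, hx]
  · intro y hy
    simp only [two_apply0, two_apply1]
  · intro x hx
    dsimp only
    refine Prod.ext ?_ ?_ <;> (ext a; match a with
      | 0 => rw [two_apply0]
      | 1 => rw [two_apply1])
  · intro y hy
    dsimp only
    rw [two_apply0, two_apply0, two_apply1, two_apply1]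

theorem part3 (p : ℕ) (hp : 1 ≤ p) :
    Fgf p = (∑ i ∈ Finset.range p, (X 0 * X 1) ^ i) +
      Gshift p * (Fgf p - ∑ i ∈ Finset.range (p - 1), (X 0 * X 1) ^ i) := by
  ext d
  rw [map_add, coeff_geom, coeff_mul]
  have hterm : ∀ x ∈ (Finset.HasAntidiagonal.antidiagonal d : Finset ((Fin 2 →₀ ℕ) × (Fin 2 →₀ ℕ))),
      MvPowerSeries.coeff x.1 (Gshift p) *
        MvPowerSeries.coeff x.2 (Fgf p - ∑ i ∈ Finset.range (p - 1), (X 0 * X 1) ^ i)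
      = ((gcount p (x.1 0 + (p - 1)) (x.1 1 + (p - 1)) : ℚ) *
          ((if p - 1 ≤ x.2 1 then fcount p (x.2 0) (x.2 1) else 0 : ℕ) : ℚ)) := by
    intro x _
    rw [map_sub, coeff_geom]
    have h1 : MvPowerSeries.coeff x.1 (Gshift p)
        = (gcount p (x.1 0 + (p - 1)) (x.1 1 + (p - 1)) : ℚ) := rfl
    have h2 : MvPowerSeries.coeff x.2 (Fgf p) = (fcount p (x.2 0) (x.2 1) : ℚ) := rfl
    rw [h1, h2]
    congr 1
    exact delta_rw p hp (x.2 0) (x.2 1)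
  rw [Finset.sum_congr rfl hterm]
  have hL : MvPowerSeries.coeff d (Fgf p) = (fcount p (d 0) (d 1) : ℚ) := rfl
  rw [hL]
  exact full_identity_d p hp d

open MvPowerSeries in
/-- The functional equation
`F(q,z) = 1 + qz + ⋯ + (qz)^{p-1} + (qz)^{-p+1} G(q,z) (F(q,z) - 1 - qz - ⋯ - (qz)^{p-2})`,
where `G(q,z) = (qz)^p F(q,qz)`. Here `Gshift p` is the series `(qz)^{-p+1} G(q,z)`
(the first conjunct states this) and `Fqz p` is `F(q,qz)`. -/
theorem fountain_functional_equation (p : ℕ) (hp : 1 ≤ p) :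
    Ggf p = (X 0 * X 1) ^ (p - 1) * Gshift p ∧
    Ggf p = (X 0 * X 1) ^ p * Fqz p ∧
    Fgf p = (∑ i ∈ Finset.range p, (X 0 * X 1) ^ i) +
      Gshift p * (Fgf p - ∑ i ∈ Finset.range (p - 1), (X 0 * X 1) ^ i) := by
  exact ⟨part1 p hp, part2 p hp, part3 p hp⟩
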